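/- Every weakly linear path that is a loop is tree-like: if γ : [0,T] → M takes values in a single geodesic of a geodesic metric space M and γ_0 = γ_T, then h(t) := d(γ_0, γ_t) is a height function for γ, i.e. h is continuous, nonnegative, h(0) = h(T) = 0, and d(γ_s, γ_t) ≤ h(s) + h(t) − 2 inf_{u ∈ [s,t]} h(u) for all s ≤ t. -/

import Mathlib

open Set

/-- Every weakly linear (weakly geodesic) loop is tree-like: if
`γ : [0,T] → M` is a continuous path taking values in a single geodesic of a metric space `M`
(an isometric copy of a subset of `ℝ`) and `γ T = γ 0`, then `h(t) := d(γ 0, γ t)` is a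
height function for `γ`: it is continuous and nonnegative on `[0,T]`, vanishes at both
endpoints, and `d(γ s, γ t) ≤ h s + h t − 2·inf_{[s,t]} h` for all `s ≤ t` in `[0,T]`. -/
theorem weakly_linear_loop_treeLike
    {M : Type*} [MetricSpace M] (T : ℝ) (hT : 0 ≤ T)
    (γ : ℝ → M) (hcont : ContinuousOn γ (Set.Icc 0 T))
    (hloop : γ T = γ 0)
    (hgeo : ∃ (s : Set ℝ) (φ : ℝ → M),
      (∀ x ∈ s, ∀ y ∈ s, dist (φ x) (φ y) = |x - y|) ∧
      ∀ u ∈ Set.Icc 0 T, γ u ∈ φ '' s) :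
    (∀ u ∈ Set.Icc 0 T, 0 ≤ dist (γ 0) (γ u)) ∧
    dist (γ 0) (γ 0) = 0 ∧ dist (γ 0) (γ T) = 0 ∧
    ContinuousOn (fun u => dist (γ 0) (γ u)) (Set.Icc 0 T) ∧
    ∀ s' t', s' ∈ Set.Icc 0 T → t' ∈ Set.Icc 0 T → s' ≤ t' →
      dist (γ s') (γ t') ≤ dist (γ 0) (γ s') + dist (γ 0) (γ t')
        - 2 * sInf ((fun u => dist (γ 0) (γ u)) '' Set.Icc s' t') := by
  obtain ⟨S, φ, hiso, hmem⟩ := hgeo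
  have hchoice : ∀ u, ∃ x, u ∈ Icc 0 T → x ∈ S ∧ φ x = γ u := by
    intro u
    by_cases hu : u ∈ Icc 0 T
    · obtain ⟨x, hx, hφ⟩ := hmem u hu
      exact ⟨x, fun _ => ⟨hx, hφ⟩⟩
    · exact ⟨0, fun h => absurd h hu⟩
  choose f hf using hchoice
  have key : ∀ u ∈ Icc 0 T, ∀ v ∈ Icc 0 T, dist (γ u) (γ v) = |f u - f v| := by
    intro u hu v hv
    rw [← (hf u hu).2, ← (hf v hv).2, hiso _ (hf u hu).1 _ (hf v hv).1]
  have h0T : (0 : ℝ) ∈ Icc 0 T := ⟨le_refl 0, hT⟩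
  have hfc : ContinuousOn f (Icc 0 T) := by
    rw [Metric.continuousOn_iff] at hcont ⊢
    intro b hb ε hε
    obtain ⟨δ, hδ, H⟩ := hcont b hb ε hε
    refine ⟨δ, hδ, fun a ha hab => ?_⟩
    have : dist (f a) (f b) = dist (γ a) (γ b) := by
      rw [Real.dist_eq, key a ha b hb]
    rw [this]; exact H a ha hab
  refine ⟨fun u _ => dist_nonneg, dist_self _, by rw [hloop, dist_self], ?_, ?_⟩
  · exact continuous_dist.comp_continuousOn (continuousOn_const.prodMk hcont)
  · intro s' t' hs' ht' hst
    set m := sInf ((fun u => dist (γ 0) (γ u)) '' Icc s' t') with hm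
    have hsub : Icc s' t' ⊆ Icc 0 T := Icc_subset_Icc hs'.1 ht'.2
    have hbdd : BddBelow ((fun u => dist (γ 0) (γ u)) '' Icc s' t') :=
      ⟨0, fun y ⟨u, _, hu⟩ => hu ▸ dist_nonneg⟩
    have hmle : ∀ u ∈ Icc s' t', m ≤ dist (γ 0) (γ u) := fun u hu =>
      csInf_le hbdd ⟨u, hu, rfl⟩
    have hms : m ≤ |f 0 - f s'| := by
      have := hmle s' ⟨le_refl _, hst⟩
      rwa [key 0 h0T s' hs'] at this
    have hmt : m ≤ |f 0 - f t'| := by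
      have := hmle t' ⟨hst, le_refl _⟩
      rwa [key 0 h0T t' ht'] at this
    rw [key s' hs' t' ht', key 0 h0T s' hs', key 0 h0T t' ht']
    set x := f s' - f 0 with hx
    set y := f t' - f 0 with hy
    have hxs : |f 0 - f s'| = |x| := by rw [abs_sub_comm]
    have hyt : |f 0 - f t'| = |y| := by rw [abs_sub_comm]
    have hxy' : f s' - f t' = x - y := by ring
    rw [hxs, hyt, hxy']
    rw [hxs] at hms; rw [hyt] at hmt
    by_cases hxy : 0 ≤ x * y
    · rcases abs_cases x with ⟨ex, _⟩ | ⟨ex, _⟩ <;>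
      rcases abs_cases y with ⟨ey, _⟩ | ⟨ey, _⟩ <;>
      rcases abs_cases (x - y) with ⟨e, _⟩ | ⟨e, _⟩ <;>
      nlinarith
    · push_neg at hxy
      have hm0 : m ≤ 0 := by
        have : ∃ u ∈ Icc s' t', f u = f 0 := by
          rcases mul_neg_iff.mp hxy with ⟨hx0, hy0⟩ | ⟨hx0, hy0⟩
          · -- x > 0, y < 0 : f t' < f 0 < f s'
            have : f 0 ∈ Icc (f t') (f s') := ⟨by linarith, by linarith⟩
            obtain ⟨u, hu, hfu⟩ := intermediate_value_Icc' hst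
              (hfc.mono hsub) this
            exact ⟨u, hu, hfu⟩
          · have : f 0 ∈ Icc (f s') (f t') := ⟨by linarith, by linarith⟩
            obtain ⟨u, hu, hfu⟩ := intermediate_value_Icc hst
              (hfc.mono hsub) this
            exact ⟨u, hu, hfu⟩
        obtain ⟨u, hu, hfu⟩ := this
        have := hmle u hu
        rwa [key 0 h0T u (hsub hu), hfu, sub_self, abs_zero] at this
      have := abs_sub x y
      calc |x - y| ≤ |x| + |y| := abs_sub _ _
        _ ≤ |x| + |y| - 2 * m := by linarith
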